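/- arXiv:2408.13801 — 3 statements merged into one kernel-verified Lean document; each statement's English description precedes it below -/
import Mathlib

section
/- Let V be a finite-dimensional complex inner product space and let A₁, …, Aₙ be self-adjoint linear operators on V satisfying the Clifford relations AᵢAⱼ + AⱼAᵢ = 2δᵢⱼ·id_V for all i, j. Then for every ψ ∈ V one has Σᵢ₌₁ⁿ ⟨Aᵢψ, ψ⟩² ≤ ‖ψ‖⁴. -/
/-- For self-adjoint operators `A₁, …, Aₙ` on a finite-dimensional complex inner product
space satisfying the Clifford relations `AᵢAⱼ + AⱼAᵢ = 2δᵢⱼ·id`, every `ψ` satisfies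
`Σᵢ ⟨Aᵢψ, ψ⟩² ≤ ‖ψ‖⁴`. -/
theorem stmt_2 {V : Type*} [NormedAddCommGroup V] [InnerProductSpace ℂ V]
    [FiniteDimensional ℂ V] {n : ℕ}
    (A : Fin n → (V →ₗ[ℂ] V))
    (hsym : ∀ i, (A i).IsSymmetric)
    (hcliff : ∀ i j, A i ∘ₗ A j + A j ∘ₗ A i =
      if i = j then (2 : ℂ) • LinearMap.id else 0)
    (ψ : V) :
    ∑ i, ((inner ℂ (A i ψ) ψ : ℂ)).re ^ 2 ≤ ‖ψ‖ ^ 4 := by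
  classical
  set c : Fin n → ℝ := fun i => ((inner ℂ (A i ψ) ψ : ℂ)).re with hc
  have hreal : ∀ i, (inner ℂ (A i ψ) ψ : ℂ) = ((c i : ℝ) : ℂ) := by
    intro i
    have h1 : (inner ℂ (A i ψ) ψ : ℂ) = inner ℂ ψ (A i ψ) := hsym i ψ ψ
    have h2 : (inner ℂ ψ (A i ψ) : ℂ) = starRingEnd ℂ (inner ℂ (A i ψ) ψ) :=
      (inner_conj_symm _ _).symm
    have := Complex.conj_eq_iff_re.mp (by rw [← h2, ← h1])
    exact this.symm
  set S : ℝ := ∑ i, c i ^ 2 with hS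
  have hS0 : 0 ≤ S := Finset.sum_nonneg fun i _ => sq_nonneg _
  set φ : V := ∑ i, (c i : ℂ) • A i ψ with hφdef
  have hφψ : (inner ℂ φ ψ : ℂ) = (S : ℂ) := by
    rw [hφdef, sum_inner]
    simp only [inner_smul_left, hreal, Complex.conj_ofReal, hS]
    push_cast
    congr 1
    ext i
    ring
  have key : ∀ i j, (inner ℂ (A i ψ) (A j ψ) : ℂ) + inner ℂ (A j ψ) (A i ψ)
      = if i = j then 2 * inner ℂ ψ ψ else 0 := by
    intro i j
    have h1 : (inner ℂ (A i ψ) (A j ψ) : ℂ) = inner ℂ ψ (A i (A j ψ)) := hsym i ψ (A j ψ)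
    have h2 : (inner ℂ (A j ψ) (A i ψ) : ℂ) = inner ℂ ψ (A j (A i ψ)) := hsym j ψ (A i ψ)
    have h3 := congrArg (fun T : V →ₗ[ℂ] V => (inner ℂ ψ (T ψ) : ℂ)) (hcliff i j)
    simp only [LinearMap.add_apply, LinearMap.comp_apply] at h3
    rw [h1, h2, ← inner_add_right, h3]
    by_cases hij : i = j <;> simp [hij, inner_smul_right]
  have hdouble : (inner ℂ φ φ : ℂ)
      = ∑ i, ∑ j, (c i : ℂ) * c j * inner ℂ (A i ψ) (A j ψ) := by
    rw [hφdef, sum_inner]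
    congr 1; ext i
    rw [inner_smul_left, inner_sum, Finset.mul_sum]
    congr 1; ext j
    rw [inner_smul_right, Complex.conj_ofReal]
    ring
  have hswap : ∑ i, ∑ j, (c i : ℂ) * c j * inner ℂ (A i ψ) (A j ψ)
      = ∑ i, ∑ j, (c i : ℂ) * c j * inner ℂ (A j ψ) (A i ψ) := by
    rw [Finset.sum_comm]
    congr 1; ext i; congr 1; ext j; ring_nf
  have hφφ : (inner ℂ φ φ : ℂ) = (S : ℂ) * inner ℂ ψ ψ := by
    have h2 : (2 : ℂ) * inner ℂ φ φ
        = ∑ i, ∑ j, (c i : ℂ) * c j *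
            ((inner ℂ (A i ψ) (A j ψ) : ℂ) + inner ℂ (A j ψ) (A i ψ)) := by
      rw [two_mul]
      nth_rewrite 1 [hdouble]
      nth_rewrite 1 [hdouble]
      nth_rewrite 2 [hswap]
      rw [← Finset.sum_add_distrib]
      congr 1; ext i
      rw [← Finset.sum_add_distrib]
      congr 1; ext j
      ring
    have h3 : (2 : ℂ) * inner ℂ φ φ = (2 : ℂ) * ((S : ℂ) * inner ℂ ψ ψ) := by
      rw [h2]
      simp only [key, mul_ite, mul_zero]
      rw [Finset.sum_congr rfl (fun i _ => Finset.sum_ite_eq (Finset.univ) i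
        (fun j => (c i : ℂ) * c j * (2 * inner ℂ ψ ψ)))]
      simp only [Finset.mem_univ, if_true, hS]
      push_cast
      rw [Finset.sum_mul, Finset.mul_sum]
      congr 1; ext i
      ring
    have := mul_left_cancel₀ (two_ne_zero (α := ℂ)) h3
    exact this
  have hnφ : ‖φ‖ ^ 2 = S * ‖ψ‖ ^ 2 := by
    have h := congrArg Complex.re hφφ
    have h1 : (inner ℂ φ φ : ℂ).re = ‖φ‖ ^ 2 := by
      simpa using inner_self_eq_norm_sq (𝕜 := ℂ) (x := φ)
    have h2 : (inner ℂ ψ ψ : ℂ).re = ‖ψ‖ ^ 2 := by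
      simpa using inner_self_eq_norm_sq (𝕜 := ℂ) (x := ψ)
    rw [h1, Complex.mul_re, Complex.ofReal_re, Complex.ofReal_im, h2] at h
    simpa using h
  have hCS : S ≤ ‖φ‖ * ‖ψ‖ := by
    have := re_inner_le_norm (𝕜 := ℂ) φ ψ
    rw [hφψ] at this
    simpa using this
  have h4 : ‖φ‖ ^ 2 * ‖ψ‖ ^ 2 = S * ‖ψ‖ ^ 4 := by rw [hnφ]; ring
  nlinarith [mul_self_le_mul_self hS0 hCS, h4, hS0, pow_nonneg (norm_nonneg ψ) 4]
end

section
/- Let V be a finite-dimensional complex inner product space, let A₁, …, Aₙ be self-adjoint linear operators on V satisfying the Clifford relations AᵢAⱼ + AⱼAᵢ = 2δᵢⱼ·id_V, and let ψ ∈ V be nonzero. Set f = ‖ψ‖² and Wᵢ = ⟨Aᵢψ, ψ⟩ for i = 1, …, n. If Σᵢ₌₁ⁿ Wᵢ² = f², then (Σᵢ₌₁ⁿ Wᵢ Aᵢ) ψ = f ψ. -/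
/-- For self-adjoint operators `A₁, …, Aₙ` on a finite-dimensional complex inner ℂ product
space satisfying the Clifford relations, and a nonzero `ψ` with `f = ‖ψ‖²`,
`Wᵢ = ⟨Aᵢψ, ψ⟩`: if `Σᵢ Wᵢ² = f²`, then `(Σᵢ Wᵢ Aᵢ) ψ = f ψ`. -/
theorem stmt_4 {V : Type*} [NormedAddCommGroup V] [InnerProductSpace ℂ V]
    [FiniteDimensional ℂ V] {n : ℕ}
    (A : Fin n → (V →ₗ[ℂ] V))
    (hsym : ∀ i, (A i).IsSymmetric)
    (hcliff : ∀ i j, A i ∘ₗ A j + A j ∘ₗ A i =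
      if i = j then (2 : ℂ) • LinearMap.id else 0)
    (ψ : V) (hψ : ψ ≠ 0)
    (f : ℝ) (hf : f = ‖ψ‖ ^ 2)
    (W : Fin n → ℝ) (hW : ∀ i, W i = ((inner ℂ (A i ψ) ψ : ℂ)).re)
    (hnorm : ∑ i, W i ^ 2 = f ^ 2) :
    (∑ i, (W i : ℂ) • A i) ψ = (f : ℂ) • ψ := by
  set T : V →ₗ[ℂ] V := ∑ i, (W i : ℂ) • A i with hT
  -- ⟪A i ψ, ψ⟫ is real, equal to W i
  have hre : ∀ i, (inner ℂ (A i ψ) ψ : ℂ) = ((W i : ℝ) : ℂ) := by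
    intro i
    have hc : (starRingEnd ℂ) (inner ℂ (A i ψ) ψ : ℂ) = inner ℂ (A i ψ) ψ := by
      rw [inner_conj_symm]
      exact (hsym i ψ ψ).symm
    rw [hW i]
    exact (Complex.conj_eq_iff_re.mp hc).symm
  -- T is symmetric
  have hTsym : ∀ x y : V, (inner ℂ (T x) y : ℂ) = inner ℂ x (T y) := by
    intro x y
    simp only [hT, LinearMap.sum_apply, LinearMap.smul_apply, sum_inner, inner_sum,
      inner_smul_left, inner_smul_right, Complex.conj_ofReal]
    exact Finset.sum_congr rfl fun i _ => by rw [hsym i x y]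
  -- T² ψ = f² ψ
  have hexp : T (T ψ) = ∑ i, ∑ j, ((W i : ℂ) * (W j : ℂ)) • (A i (A j ψ)) := by
    simp only [hT, LinearMap.sum_apply, LinearMap.smul_apply, map_sum, map_smul,
      Finset.smul_sum, smul_smul]
    rw [Finset.sum_comm]
    exact Finset.sum_congr rfl fun i _ => Finset.sum_congr rfl fun j _ => by rw [mul_comm]
  have hswap : (∑ i, ∑ j, ((W i : ℂ) * (W j : ℂ)) • (A i (A j ψ)))
      = ∑ i, ∑ j, ((W i : ℂ) * (W j : ℂ)) • (A j (A i ψ)) := by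
    calc (∑ i, ∑ j, ((W i : ℂ) * (W j : ℂ)) • (A i (A j ψ)))
        = ∑ j, ∑ i, ((W i : ℂ) * (W j : ℂ)) • (A i (A j ψ)) := Finset.sum_comm
      _ = ∑ i, ∑ j, ((W i : ℂ) * (W j : ℂ)) • (A j (A i ψ)) :=
          Finset.sum_congr rfl fun i _ => Finset.sum_congr rfl fun j _ => by rw [mul_comm]
  have hcliff' : ∀ i j, A i (A j ψ) + A j (A i ψ) =
      if i = j then (2 : ℂ) • ψ else 0 := by
    intro i j
    have := congrArg (fun L : V →ₗ[ℂ] V => L ψ) (hcliff i j)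
    simpa [apply_ite (fun L : V →ₗ[ℂ] V => L ψ)] using this
  have hT2 : T (T ψ) = ((f ^ 2 : ℝ) : ℂ) • ψ := by
    have h2 : (2 : ℂ) • T (T ψ)
        = ∑ i, ∑ j, ((W i : ℂ) * (W j : ℂ)) • (A i (A j ψ) + A j (A i ψ)) := by
      rw [two_smul, hexp]
      nth_rewrite 2 [hswap]
      rw [← Finset.sum_add_distrib]
      exact Finset.sum_congr rfl fun i _ => by
        rw [← Finset.sum_add_distrib]
        exact Finset.sum_congr rfl fun j _ => (smul_add _ _ _).symm
    have h3 : (2 : ℂ) • T (T ψ) = (2 : ℂ) • (((f ^ 2 : ℝ) : ℂ) • ψ) := by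
      rw [h2]
      simp only [hcliff', smul_ite, smul_zero, Finset.sum_ite_eq, Finset.mem_univ, if_true]
      rw [← Finset.sum_smul, smul_smul, smul_smul]
      congr 1
      push_cast [← hnorm]
      rw [mul_comm]
      congr 1
      exact Finset.sum_congr rfl fun i _ => by ring
    exact smul_right_injective V (by norm_num) h3
  -- compute inner ℂ products
  have hinner_self : (inner ℂ ψ ψ : ℂ) = (f : ℂ) := by
    rw [inner_self_eq_norm_sq_to_K, hf]
    norm_cast
  have hTψψ : (inner ℂ (T ψ) ψ : ℂ) = ((f ^ 2 : ℝ) : ℂ) := by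
    simp only [hT, LinearMap.sum_apply, LinearMap.smul_apply, sum_inner,
      inner_smul_left, Complex.conj_ofReal, hre]
    push_cast [← hnorm]
    exact Finset.sum_congr rfl fun i _ => by ring
  have hψTψ : (inner ℂ ψ (T ψ) : ℂ) = ((f ^ 2 : ℝ) : ℂ) := by
    rw [← inner_conj_symm, hTψψ, Complex.conj_ofReal]
  have hzero : (inner ℂ (T ψ - (f : ℂ) • ψ) (T ψ - (f : ℂ) • ψ) : ℂ) = 0 := by
    rw [inner_sub_left, inner_sub_right, inner_sub_right,
      inner_smul_left, inner_smul_left, inner_smul_right, inner_smul_right,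
      hTsym ψ (T ψ), hT2, inner_smul_right, hinner_self, hTψψ, hψTψ,
      Complex.conj_ofReal]
    push_cast
    ring
  have := inner_self_eq_zero.mp hzero
  rw [sub_eq_zero] at this
  exact this
end

section
/- Let Ω ⊆ ℝⁿ be a connected open set, let q : Ω → Mₙ(ℝ) be a continuous real matrix-valued function, and let z : Ω → ℂ and Z = (Z₁, …, Zₙ) : Ω → ℂⁿ be differentiable functions satisfying ∂ᵢ z(x) = Σⱼ qᵢⱼ(x) Zⱼ(x) and ∂ᵢ Zⱼ(x) = qᵢⱼ(x) z(x) for all x ∈ Ω and all indices i, j. Then the real-valued function |z|² − Σⱼ |Zⱼ|² is constant on Ω. In particular, if in addition z and Z both vanish at some point x₀ ∈ Ω and q is bounded on Ω, then z ≡ 0 and Z ≡ 0 on Ω. -/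
open scoped RealInnerProductSpace

private lemma sum_app' {n : ℕ} (s : Finset (Fin n)) (f : Fin n → EuclideanSpace ℝ (Fin n))
    (j : Fin n) : (∑ x ∈ s, f x) j = ∑ x ∈ s, f x j := by
  induction s using Finset.induction_on with
  | empty => rfl
  | insert a s h ih => rw [Finset.sum_insert h, Finset.sum_insert h, ← ih]; rfl

private lemma euclid_abs_le {n : ℕ} (v : EuclideanSpace ℝ (Fin n)) (i : Fin n) : |v i| ≤ ‖v‖ := by
  rw [EuclideanSpace.norm_eq]
  calc |v i| = Real.sqrt (‖v i‖ ^ 2) := by rw [Real.sqrt_sq (norm_nonneg _), Real.norm_eq_abs]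
  _ ≤ _ := Real.sqrt_le_sqrt (Finset.single_le_sum (f := fun j => ‖v j‖ ^ 2)
      (fun j _ => sq_nonneg _) (Finset.mem_univ i))

private lemma euclid_sum_single {n : ℕ} (v : EuclideanSpace ℝ (Fin n)) :
    ∑ i, v i • (EuclideanSpace.single i (1:ℝ)) = v := by
  ext j
  rw [sum_app']
  simp [EuclideanSpace.single_apply, PiLp.smul_apply]

private lemma clm_eval {n : ℕ} {F : Type*} [NormedAddCommGroup F] [NormedSpace ℝ F]
    (L : EuclideanSpace ℝ (Fin n) →L[ℝ] F) (v : EuclideanSpace ℝ (Fin n)) :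
    L v = ∑ i, v i • L (EuclideanSpace.single i 1) := by
  conv_lhs => rw [← euclid_sum_single v]
  rw [map_sum]
  simp

private lemma eq_on_closure_pt {X Y : Type*} [TopologicalSpace X] [TopologicalSpace Y] [T1Space Y]
    {f : X → Y} {u : Set X} {c : Y} {x : X} (hf : ContinuousAt f x) (hx : x ∈ closure u)
    (h : ∀ w ∈ u, f w = c) : f x = c := by
  have h1 := mem_closure_image hf hx
  have h2 : closure (f '' u) ⊆ {c} :=
    closure_minimal (by rintro _ ⟨w, hw, rfl⟩; exact h w hw) isClosed_singleton
  exact h2 h1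

private lemma key_alg (a b : ℂ) (r : ℝ) :
    ((starRingEnd ℂ) a * (↑r * b)).re + ((starRingEnd ℂ) (↑r * b) * a).re -
      (((starRingEnd ℂ) b * (↑r * a)).re + ((starRingEnd ℂ) (↑r * a) * b).re) = 0 := by
  simp only [map_mul, Complex.conj_ofReal, Complex.mul_re, Complex.conj_re, Complex.conj_im,
    Complex.ofReal_re, Complex.ofReal_im, Complex.mul_im]
  ring

private lemma hf0_aux {n : ℕ} (q : Matrix (Fin n) (Fin n) ℝ)
    (z : EuclideanSpace ℝ (Fin n) → ℂ) (Z : EuclideanSpace ℝ (Fin n) → Fin n → ℂ)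
    (a : EuclideanSpace ℝ (Fin n))
    (hza : DifferentiableAt ℝ z a)
    (hZa : ∀ j, DifferentiableAt ℝ (fun y => Z y j) a)
    (hdza : ∀ i, fderiv ℝ z a (EuclideanSpace.single i 1) = ∑ j, (q i j : ℂ) * Z a j)
    (hdZa : ∀ i j, fderiv ℝ (fun y => Z y j) a (EuclideanSpace.single i 1) = (q i j : ℂ) * z a) :
    fderiv ℝ (fun w => ‖z w‖ ^ 2 - ∑ j, ‖Z w j‖ ^ 2) a = 0 := by
  have funeq : (fun w => ‖z w‖ ^ 2 - ∑ j, ‖Z w j‖ ^ 2)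
      = fun w => ⟪z w, z w⟫ - ∑ j, ⟪Z w j, Z w j⟫ := by
    funext w
    simp [real_inner_self_eq_norm_sq]
  have h1 : DifferentiableAt ℝ (fun w => (⟪z w, z w⟫ : ℝ)) a := hza.inner ℝ hza
  have h2 : ∀ j ∈ Finset.univ, DifferentiableAt ℝ (fun w => (⟪Z w j, Z w j⟫ : ℝ)) a :=
    fun j _ => (hZa j).inner ℝ (hZa j)
  have h2' : DifferentiableAt ℝ (fun w => ∑ j, (⟪Z w j, Z w j⟫ : ℝ)) a :=
    DifferentiableAt.fun_sum h2
  rw [funeq]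
  apply ContinuousLinearMap.ext
  intro v
  rw [ContinuousLinearMap.zero_apply, clm_eval]
  apply Finset.sum_eq_zero
  intro i _
  have hbase : fderiv ℝ (fun w => ⟪z w, z w⟫ - ∑ j, (⟪Z w j, Z w j⟫ : ℝ)) a
      (EuclideanSpace.single i 1) = 0 := by
    rw [fderiv_fun_sub h1 h2', ContinuousLinearMap.sub_apply, fderiv_fun_sum h2,
      ContinuousLinearMap.sum_apply, fderiv_inner_apply ℝ hza hza]
    have e3 : ∀ j ∈ Finset.univ, fderiv ℝ (fun w => (⟪Z w j, Z w j⟫ : ℝ)) a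
        (EuclideanSpace.single i 1)
        = ⟪Z a j, (q i j : ℂ) * z a⟫ + ⟪(q i j : ℂ) * z a, Z a j⟫ := fun j _ => by
      rw [fderiv_inner_apply ℝ (hZa j) (hZa j), hdZa i j]
    rw [Finset.sum_congr rfl e3, hdza i, inner_sum, sum_inner, ← Finset.sum_add_distrib,
      ← Finset.sum_sub_distrib]
    exact Finset.sum_eq_zero fun j _ => by
      simpa only [Complex.inner, mul_comm _ ((starRingEnd ℂ) _)] using key_alg (z a) (Z a j) (q i j)
  rw [hbase, smul_zero]

private lemma vanish_local {n : ℕ} (Ω : Set (EuclideanSpace ℝ (Fin n)))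
    (q : EuclideanSpace ℝ (Fin n) → Matrix (Fin n) (Fin n) ℝ)
    (z : EuclideanSpace ℝ (Fin n) → ℂ)
    (Z : EuclideanSpace ℝ (Fin n) → Fin n → ℂ)
    (hz : ∀ x ∈ Ω, DifferentiableAt ℝ z x)
    (hZ : ∀ x ∈ Ω, ∀ j, DifferentiableAt ℝ (fun y => Z y j) x)
    (hdz : ∀ x ∈ Ω, ∀ i, fderiv ℝ z x (EuclideanSpace.single i 1) =
      ∑ j, (q x i j : ℂ) * Z x j)
    (hdZ : ∀ x ∈ Ω, ∀ i j,
      fderiv ℝ (fun y => Z y j) x (EuclideanSpace.single i 1) = (q x i j : ℂ) * z x)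
    (C : ℝ) (hC : ∀ x ∈ Ω, ∀ i j, |q x i j| ≤ C)
    (a : EuclideanSpace ℝ (Fin n)) (ε : ℝ) (hball : Metric.ball a ε ⊆ Ω)
    (hza : z a = 0) (hZa : ∀ j, Z a j = 0)
    (x : EuclideanSpace ℝ (Fin n)) (hx : x ∈ Metric.ball a ε) :
    z x = 0 ∧ ∀ j, Z x j = 0 := by
  set C' : ℝ := |C| + 1 with hC'def
  have hC'0 : (0:ℝ) ≤ C' := by positivity
  have hC' : ∀ x ∈ Ω, ∀ i j, |q x i j| ≤ C' := fun x hx i j =>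
    (hC x hx i j).trans ((le_abs_self C).trans (by linarith))
  set v : EuclideanSpace ℝ (Fin n) := x - a with hvdef
  have hv : ‖v‖ < ε := by
    rw [hvdef, ← dist_eq_norm]
    exact Metric.mem_ball.mp hx
  have hε0 : 0 ≤ ε := le_of_lt (lt_of_le_of_lt (norm_nonneg v) hv)
  set γ : ℝ → EuclideanSpace ℝ (Fin n) := fun t => a + t • v with hγdef
  have hγmem : ∀ t ∈ Set.Icc (0:ℝ) 1, γ t ∈ Metric.ball a ε := by
    intro t ht
    rw [Metric.mem_ball, dist_eq_norm]
    have : γ t - a = t • v := by rw [hγdef]; exact add_sub_cancel_left a (t • v)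
    rw [this, norm_smul, Real.norm_eq_abs]
    calc |t| * ‖v‖ ≤ 1 * ‖v‖ := by
          apply mul_le_mul_of_nonneg_right _ (norm_nonneg v)
          rw [abs_le]; exact ⟨by linarith [ht.1], ht.2⟩
    _ = ‖v‖ := one_mul _
    _ < ε := hv
  have hγΩ : ∀ t ∈ Set.Icc (0:ℝ) 1, γ t ∈ Ω := fun t ht => hball (hγmem t ht)
  have hγ' : ∀ t : ℝ, HasDerivAt γ v t := fun t => by
    simpa [hγdef] using ((hasDerivAt_id t).smul_const v).const_add a
  set w : ℝ → ℂ × (Fin n → ℂ) := fun t => (z (γ t), fun j => Z (γ t) j) with hwdef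
  set w' : ℝ → ℂ × (Fin n → ℂ) :=
    fun t => (fderiv ℝ z (γ t) v, fun j => fderiv ℝ (fun y => Z y j) (γ t) v) with hw'def
  have hw : ∀ t ∈ Set.Icc (0:ℝ) 1, HasDerivAt w (w' t) t := fun t ht =>
    HasDerivAt.prodMk
      ((hz _ (hγΩ t ht)).hasFDerivAt.comp_hasDerivAt t (hγ' t))
      (hasDerivAt_pi.2 fun j => ((hZ _ (hγΩ t ht) j).hasFDerivAt.comp_hasDerivAt t (hγ' t)))
  set K : ℝ := (n:ℝ)^2 * C' * ε with hKdef
  have hK0 : 0 ≤ K := by positivity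
  have hbound : ∀ t ∈ Set.Ico (0:ℝ) 1, ‖w' t‖ ≤ K * ‖w t‖ + 0 := by
    intro t ht
    have htΩ : γ t ∈ Ω := hγΩ t (Set.Ico_subset_Icc_self ht)
    set M : ℝ := ‖w t‖ with hMdef
    have hM0 : (0:ℝ) ≤ M := norm_nonneg _
    have hZle : ∀ j, ‖Z (γ t) j‖ ≤ M := fun j =>
      le_trans (norm_le_pi_norm (fun j => Z (γ t) j) j) (norm_snd_le (w t))
    have hzle : ‖z (γ t)‖ ≤ M := norm_fst_le (w t)
    have hvi : ∀ i : Fin n, |v i| ≤ ε := fun i => (euclid_abs_le v i).trans (le_of_lt hv)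
    have hcomp1 : ‖(w' t).1‖ ≤ K * M := by
      show ‖fderiv ℝ z (γ t) v‖ ≤ K * M
      rw [clm_eval]
      calc ‖∑ i, v i • fderiv ℝ z (γ t) (EuclideanSpace.single i 1)‖
          ≤ ∑ i, ‖v i • fderiv ℝ z (γ t) (EuclideanSpace.single i 1)‖ := norm_sum_le _ _
        _ ≤ ∑ i : Fin n, ε * ((n:ℝ) * (C' * M)) := by
            apply Finset.sum_le_sum
            intro i _
            rw [norm_smul, Real.norm_eq_abs, hdz _ htΩ i]
            have h1 : ‖∑ j, (q (γ t) i j : ℂ) * Z (γ t) j‖ ≤ (n:ℝ) * (C' * M) := by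
              calc ‖∑ j, (q (γ t) i j : ℂ) * Z (γ t) j‖
                  ≤ ∑ j, ‖(q (γ t) i j : ℂ) * Z (γ t) j‖ := norm_sum_le _ _
                _ ≤ ∑ j : Fin n, C' * M := by
                    apply Finset.sum_le_sum
                    intro j _
                    rw [norm_mul, Complex.norm_real, Real.norm_eq_abs]
                    exact mul_le_mul (hC' _ htΩ i j) (hZle j) (norm_nonneg _) hC'0
                _ = (n:ℝ) * (C' * M) := by
                    rw [Finset.sum_const, Finset.card_univ, Fintype.card_fin, nsmul_eq_mul]
            exact mul_le_mul (hvi i) h1 (norm_nonneg _) hε0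
        _ = (n:ℝ) * (ε * ((n:ℝ) * (C' * M))) := by
            rw [Finset.sum_const, Finset.card_univ, Fintype.card_fin, nsmul_eq_mul]
        _ = K * M := by rw [hKdef]; ring
    have hcomp2 : ‖(w' t).2‖ ≤ K * M := by
      apply pi_norm_le_iff_of_nonneg (by positivity) |>.mpr
      intro j
      show ‖fderiv ℝ (fun y => Z y j) (γ t) v‖ ≤ K * M
      rw [clm_eval]
      calc ‖∑ i, v i • fderiv ℝ (fun y => Z y j) (γ t) (EuclideanSpace.single i 1)‖
          ≤ ∑ i, ‖v i • fderiv ℝ (fun y => Z y j) (γ t) (EuclideanSpace.single i 1)‖ :=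
            norm_sum_le _ _
        _ ≤ ∑ i : Fin n, ε * (C' * M) := by
            apply Finset.sum_le_sum
            intro i _
            rw [norm_smul, Real.norm_eq_abs, hdZ _ htΩ i j, norm_mul, Complex.norm_real,
              Real.norm_eq_abs]
            exact mul_le_mul (hvi i)
              (mul_le_mul (hC' _ htΩ i j) hzle (norm_nonneg _) hC'0) (by positivity) hε0
        _ = (n:ℝ) * (ε * (C' * M)) := by
            rw [Finset.sum_const, Finset.card_univ, Fintype.card_fin, nsmul_eq_mul]
        _ ≤ (n:ℝ)^2 * (ε * (C' * M)) := by
            apply mul_le_mul_of_nonneg_right _ (by positivity)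
            exact_mod_cast Nat.le_self_pow two_ne_zero n
        _ = K * M := by rw [hKdef]; ring
    rw [add_zero, Prod.norm_def]
    exact max_le hcomp1 hcomp2
  have hcont : ContinuousOn w (Set.Icc 0 1) := fun t ht =>
    ((hw t ht).continuousAt).continuousWithinAt
  have h0 : ‖w 0‖ ≤ 0 := by
    have hw0 : w 0 = 0 := by
      have hγ0 : γ 0 = a := by rw [hγdef]; simp
      rw [hwdef]
      simp only [hγ0, hza]
      exact Prod.ext rfl (funext fun j => hZa j)
    rw [hw0, norm_zero]
  have hg := norm_le_gronwallBound_of_norm_deriv_right_le hcont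
    (fun t ht => (hw t (Set.Ico_subset_Icc_self ht)).hasDerivWithinAt) h0 hbound
  have h1 : ‖w 1‖ ≤ 0 := by
    have := hg 1 (by norm_num)
    rwa [gronwallBound_ε0_δ0] at this
  have hw1 : w 1 = 0 := norm_le_zero_iff.mp h1
  have hγ1 : γ 1 = x := by rw [hγdef, hvdef]; simp
  have hz1 : z (γ 1) = 0 := congrArg Prod.fst hw1
  have hZ1 : ∀ j, Z (γ 1) j = 0 := fun j => congrFun (congrArg Prod.snd hw1) j
  rw [hγ1] at hz1
  refine ⟨hz1, fun j => ?_⟩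
  have := hZ1 j
  rwa [hγ1] at this

/-- If on a connected open set `Ω ⊆ ℝⁿ` the differentiable functions `z : Ω → ℂ` and
`Z : Ω → ℂⁿ` satisfy `∂ᵢ z = Σⱼ qᵢⱼ Zⱼ` and `∂ᵢ Zⱼ = qᵢⱼ z` for a continuous real
matrix-valued `q`, then `|z|² − Σⱼ |Zⱼ|²` is constant on `Ω`; and if moreover `z`
and `Z` vanish at some point of `Ω` and `q` is bounded on `Ω`, then `z ≡ 0` and
`Z ≡ 0` on `Ω`. -/
theorem stmt_8 {n : ℕ} (Ω : Set (EuclideanSpace ℝ (Fin n)))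
    (hopen : IsOpen Ω) (hconn : IsConnected Ω)
    (q : EuclideanSpace ℝ (Fin n) → Matrix (Fin n) (Fin n) ℝ)
    (hq : ∀ i j, ContinuousOn (fun x => q x i j) Ω)
    (z : EuclideanSpace ℝ (Fin n) → ℂ)
    (Z : EuclideanSpace ℝ (Fin n) → Fin n → ℂ)
    (hz : ∀ x ∈ Ω, DifferentiableAt ℝ z x)
    (hZ : ∀ x ∈ Ω, ∀ j, DifferentiableAt ℝ (fun y => Z y j) x)
    (hdz : ∀ x ∈ Ω, ∀ i, fderiv ℝ z x (EuclideanSpace.single i 1) =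
      ∑ j, (q x i j : ℂ) * Z x j)
    (hdZ : ∀ x ∈ Ω, ∀ i j,
      fderiv ℝ (fun y => Z y j) x (EuclideanSpace.single i 1) = (q x i j : ℂ) * z x) :
    (∀ x ∈ Ω, ∀ y ∈ Ω,
      ‖z x‖ ^ 2 - ∑ j, ‖Z x j‖ ^ 2 = ‖z y‖ ^ 2 - ∑ j, ‖Z y j‖ ^ 2) ∧
    (∀ x₀ ∈ Ω, z x₀ = 0 → (∀ j, Z x₀ j = 0) →
      (∃ C : ℝ, ∀ x ∈ Ω, ∀ i j, |q x i j| ≤ C) →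
      ∀ x ∈ Ω, z x = 0 ∧ ∀ j, Z x j = 0) := by
  constructor
  · intro x hx y hy
    set f : EuclideanSpace ℝ (Fin n) → ℝ := fun w => ‖z w‖ ^ 2 - ∑ j, ‖Z w j‖ ^ 2 with hfdef
    have hfd : ∀ a ∈ Ω, DifferentiableAt ℝ f a := by
      intro a ha
      have funeq : f = fun w => ⟪z w, z w⟫ - ∑ j, ⟪Z w j, Z w j⟫ := by
        funext w
        simp [hfdef, real_inner_self_eq_norm_sq]
      rw [funeq]
      exact ((hz a ha).inner ℝ (hz a ha)).sub
        (DifferentiableAt.fun_sum fun j _ => ((hZ a ha j).inner ℝ (hZ a ha j)))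
    have hf0 : ∀ a ∈ Ω, fderiv ℝ f a = 0 := fun a ha =>
      hf0_aux (q a) z Z a (hz a ha) (hZ a ha) (hdz a ha) (hdZ a ha)
    set u : Set (EuclideanSpace ℝ (Fin n)) := {w | w ∈ Ω ∧ f w = f y} with hudef
    have hu : IsOpen u := by
      rw [Metric.isOpen_iff]
      intro b hb
      obtain ⟨ε, hε, hball⟩ := Metric.isOpen_iff.mp hopen b hb.1
      refine ⟨ε, hε, fun p hp => ⟨hball hp, ?_⟩⟩
      have hconst := (convex_ball b ε).is_const_of_fderivWithin_eq_zero (𝕜 := ℝ) (f := f)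
        (fun r hr => (hfd r (hball hr)).differentiableWithinAt)
        (fun r hr => by
          rw [fderivWithin_of_isOpen Metric.isOpen_ball hr]
          exact hf0 r (hball hr))
        hp (Metric.mem_ball_self hε)
      rw [hconst]
      exact hb.2
    have hnon : (Ω ∩ u).Nonempty := ⟨y, hy, hy, rfl⟩
    have hclo : closure u ∩ Ω ⊆ u := by
      rintro p ⟨hpc, hpΩ⟩
      exact ⟨hpΩ, eq_on_closure_pt (hfd p hpΩ).continuousAt hpc (fun r hr => hr.2)⟩
    have hsub := hconn.isPreconnected.subset_of_closure_inter_subset hu hnon hclo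
    exact (hsub hx).2
  · rintro x₀ hx₀ hz0 hZ0 ⟨C, hC⟩
    set u : Set (EuclideanSpace ℝ (Fin n)) :=
      {w | w ∈ Ω ∧ z w = 0 ∧ ∀ j, Z w j = 0} with hudef
    have hu : IsOpen u := by
      rw [Metric.isOpen_iff]
      intro b hb
      obtain ⟨ε, hε, hball⟩ := Metric.isOpen_iff.mp hopen b hb.1
      exact ⟨ε, hε, fun p hp => ⟨hball hp,
        vanish_local Ω q z Z hz hZ hdz hdZ C hC b ε hball hb.2.1 hb.2.2 p hp⟩⟩
    have hnon : (Ω ∩ u).Nonempty := ⟨x₀, hx₀, hx₀, hz0, hZ0⟩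
    have hclo : closure u ∩ Ω ⊆ u := by
      rintro p ⟨hpc, hpΩ⟩
      refine ⟨hpΩ, eq_on_closure_pt (hz p hpΩ).continuousAt hpc (fun r hr => hr.2.1),
        fun j => eq_on_closure_pt (f := fun y => Z y j) (hZ p hpΩ j).continuousAt hpc (fun r hr => hr.2.2 j)⟩
    have hsub := hconn.isPreconnected.subset_of_closure_inter_subset hu hnon hclo
    exact fun x hx => (hsub hx).2
end
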